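/- Let Λ = {t₁,...,tₙ} with a fixed enumeration, X a finite set, and P a strictly positive probability distribution on X^Λ with one-point conditional probabilities Q_t^z. Then for every x, u ∈ X^Λ, P(x) = (∏_{j=1}^n Q_{t_j}^{(xu)_j}(x_j)/Q_{t_j}^{(xu)_j}(u_j)) · (Σ_{α∈X^Λ} ∏_{j=1}^n Q_{t_j}^{(αu)_j}(α_j)/Q_{t_j}^{(αu)_j}(u_j))^{-1}, where (xu)_j denotes the boundary configuration x₁...x_{j-1}u_{j+1}...uₙ on Λ\{t_j}. -/
import Mathlib


def cat {Λ X : Type*} [DecidableEq Λ] (t : Λ) (x : X) (z : {s : Λ // s ≠ t} → X) : Λ → X :=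
  fun s => if h : s = t then x else z ⟨s, h⟩

def catT {Λ X : Type*} [DecidableEq Λ] (t s : Λ) (y : X) (z : {r : Λ // r ≠ t ∧ r ≠ s} → X) :
    {r : Λ // r ≠ t} → X :=
  fun r => if h : r.1 = s then y else z ⟨r.1, r.2, h⟩

def catS {Λ X : Type*} [DecidableEq Λ] (t s : Λ) (x : X) (z : {r : Λ // r ≠ t ∧ r ≠ s} → X) :
    {r : Λ // r ≠ s} → X :=
  fun r => if h : r.1 = t then x else z ⟨r.1, h, r.2⟩

/-- The boundary configuration on `Λ \ {j}` (Λ = Fin n) equal to `x` at points before `j`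
and to `u` at points after `j`. -/
def mix {n : ℕ} {X : Type*} (j : Fin n) (x u : Fin n → X) : {i : Fin n // i ≠ j} → X :=
  fun i => if i.1 < j then x i.1 else u i.1

private lemma tele (f : ℕ → ℝ) (hf : ∀ i, f i ≠ 0) (n : ℕ) :
    ∏ i ∈ Finset.range n, f (i + 1) / f i = f n / f 0 := by
  induction n with
  | zero => simp [div_self (hf 0)]
  | succ n ih =>
    rw [Finset.prod_range_succ, ih, div_mul_div_comm, mul_comm (f n),
      mul_div_mul_comm, div_self (hf n), mul_one]

theorem stmt3 {n : ℕ} {X : Type*} [Fintype X] [Nonempty X] (hn : 0 < n)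
    (P : (Fin n → X) → ℝ) (hpos : ∀ σ, 0 < P σ) (hsum : ∑ σ, P σ = 1)
    (Q : ∀ j : Fin n, ({i : Fin n // i ≠ j} → X) → X → ℝ)
    (hQ : ∀ j z x, Q j z x = P (cat j x z) / ∑ v : X, P (cat j v z)) :
    ∀ x u : Fin n → X,
      P x = (∏ j : Fin n, Q j (mix j x u) (x j) / Q j (mix j x u) (u j))
        * (∑ α : Fin n → X,
            ∏ j : Fin n, Q j (mix j α u) (α j) / Q j (mix j α u) (u j))⁻¹ := by
  intro x u
  set step : (Fin n → X) → ℕ → (Fin n → X) :=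
    fun a k i => if (i : ℕ) < k then a i else u i with hstep
  have hS : ∀ (j : Fin n) z, (0 : ℝ) < ∑ v : X, P (cat j v z) := fun j z =>
    Finset.sum_pos (fun v _ => hpos _) Finset.univ_nonempty
  have hQratio : ∀ (a : Fin n → X) (j : Fin n),
      Q j (mix j a u) (a j) / Q j (mix j a u) (u j)
        = P (cat j (a j) (mix j a u)) / P (cat j (u j) (mix j a u)) := by
    intro a j
    rw [hQ, hQ]
    have h1 := (hS j (mix j a u)).ne'
    have h2 := (hpos (cat j (u j) (mix j a u))).ne'
    field_simp
  have hcat1 : ∀ (a : Fin n → X) (j : Fin n),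
      cat j (a j) (mix j a u) = step a ((j : ℕ) + 1) := by
    intro a j; funext s
    simp only [cat, mix, hstep, Fin.lt_def]
    by_cases h : s = j
    · subst h; simp
    · have hv : (s : ℕ) ≠ (j : ℕ) := fun hh => h (Fin.val_injective hh)
      rw [dif_neg h]
      rcases lt_or_gt_of_ne hv with hlt | hgt
      · rw [if_pos hlt, if_pos (show (s:ℕ) < (j:ℕ) + 1 by omega)]
      · rw [if_neg (by omega : ¬ (s:ℕ) < (j:ℕ)), if_neg (by omega : ¬ (s:ℕ) < (j:ℕ) + 1)]
  have hcat0 : ∀ (a : Fin n → X) (j : Fin n),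
      cat j (u j) (mix j a u) = step a (j : ℕ) := by
    intro a j; funext s
    simp only [cat, mix, hstep, Fin.lt_def]
    by_cases h : s = j
    · subst h; simp
    · rw [dif_neg h]
  have hstepn : ∀ a : Fin n → X, step a n = a := by
    intro a; funext i; simp [hstep, i.isLt]
  have hstep0 : ∀ a : Fin n → X, step a 0 = u := by
    intro a; funext i; simp [hstep]
  have key : ∀ a : Fin n → X,
      (∏ j : Fin n, Q j (mix j a u) (a j) / Q j (mix j a u) (u j)) = P a / P u := by
    intro a
    have : (∏ j : Fin n, Q j (mix j a u) (a j) / Q j (mix j a u) (u j))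
        = ∏ j : Fin n, (fun k : ℕ => P (step a (k + 1)) / P (step a k)) (j : ℕ) := by
      refine Finset.prod_congr rfl fun j _ => ?_
      rw [hQratio, hcat1, hcat0]
    have h2 := Fin.prod_univ_eq_prod_range (fun k : ℕ => P (step a (k + 1)) / P (step a k)) n
    rw [this, h2]
    rw [tele _ (fun i => (hpos _).ne') n, hstepn, hstep0]
  have hsum2 : (∑ α : Fin n → X,
      ∏ j : Fin n, Q j (mix j α u) (α j) / Q j (mix j α u) (u j)) = (P u)⁻¹ := by
    rw [Finset.sum_congr rfl fun α _ => key α, ← Finset.sum_div, hsum, one_div]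
  rw [key x, hsum2, inv_inv, div_mul_cancel₀ _ (hpos u).ne']
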